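/- arXiv:2008.05854 — 3 statements merged into one kernel-verified Lean document; each statement's English description precedes it below -/
import Mathlib

section
/- Let $S_1,\ldots,S_K$ be mutually independent random symmetric $p\times p$ real matrices with finite second moments, $E[S_k]=M_k$, and let $\delta_k = p^{-1}E[\|S_k-M_k\|_F^2]$, $c_{ij}=p^{-1}\operatorname{tr}(M_iM_j)$, $D=\operatorname{diag}(\delta_1,\ldots,\delta_K)$, $C=(c_{ij})$, $c_k$ the $k$-th column of $C$. If $\delta_k>0$ for all $k$, then for every $a\in\mathbb{R}^K$ and every class $k$, $E[\|\sum_{i=1}^K a_i S_i - M_k\|_F^2] = p\,(a^\top (D+C)a - 2 c_k^\top a + c_{kk})$, and $D+C$ is a symmetric positive definite matrix. -/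
open MeasureTheory Matrix ProbabilityTheory Filter Asymptotics

noncomputable section

/-- Borel/pi measurable structure on matrices (a matrix is a function of its entries). -/
instance matrixMeasurableSpace {p : ℕ} : MeasurableSpace (Matrix (Fin p) (Fin p) ℝ) :=
  inferInstanceAs (MeasurableSpace (Fin p → Fin p → ℝ))

/-- Squared Frobenius norm `‖A‖_F² = tr(Aᵀ A)`. -/
def frobSq {p : ℕ} (A : Matrix (Fin p) (Fin p) ℝ) : ℝ := (Aᵀ * A).trace

/-- Entrywise expectation of a random matrix. -/
def matExp {Ω : Type*} [MeasurableSpace Ω] (μ : Measure Ω) {p : ℕ}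
    (S : Ω → Matrix (Fin p) (Fin p) ℝ) : Matrix (Fin p) (Fin p) ℝ :=
  Matrix.of fun i j => ∫ ω, S ω i j ∂μ

lemma mul_integrable_of_memL2 {Ω : Type*} [MeasurableSpace Ω] {μ : Measure Ω}
    [IsFiniteMeasure μ]
    {f g : Ω → ℝ} (hf : MemLp f 2 μ) (hg : MemLp g 2 μ) :
    Integrable (fun ω => f ω * g ω) μ := by
  have h : MemLp (g • f) 1 μ :=
    hf.smul hg
  have h2 := h.integrable le_rfl
  exact (by simpa [Pi.smul_apply, smul_eq_mul, mul_comm] using h2 : Integrable (f * g) μ)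

lemma frobSq_eq' {p : ℕ} (A : Matrix (Fin p) (Fin p) ℝ) :
    frobSq A = ∑ j, ∑ i, (A i j)^2 := by
  simp [frobSq, Matrix.trace, Matrix.mul_apply, Matrix.diag, sq]

lemma integral_sq_sum_add_const {Ω : Type*} [MeasurableSpace Ω] (μ : Measure Ω)
    [IsProbabilityMeasure μ] {K : ℕ}
    (y : Fin K → Ω → ℝ) (hy : ∀ i, MemLp (y i) 2 μ)
    (hmean : ∀ i, ∫ ω, y i ω ∂μ = 0)
    (hcross : ∀ i j, i ≠ j → ∫ ω, y i ω * y j ω ∂μ = 0)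
    (a : Fin K → ℝ) (b : ℝ) :
    ∫ ω, (∑ i, a i * y i ω + b)^2 ∂μ
      = ∑ i, (a i)^2 * ∫ ω, (y i ω)^2 ∂μ + b^2 := by
  have hint : ∀ i, Integrable (y i) μ := fun i => (hy i).integrable one_le_two
  have hmul : ∀ i j, Integrable (fun ω => (a i * a j) * (y i ω * y j ω)) μ :=
    fun i j => (mul_integrable_of_memL2 (hy i) (hy j)).const_mul _
  have hpt : ∀ ω, (∑ i, a i * y i ω + b)^2
      = ∑ i, ∑ j, (a i * a j) * (y i ω * y j ω)
        + ((2*b) * ∑ i, a i * y i ω + b^2) := by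
    intro ω
    have h1 : (∑ i, a i * y i ω)^2
        = ∑ i, ∑ j, (a i * a j) * (y i ω * y j ω) := by
      rw [sq, Finset.sum_mul_sum]
      exact Finset.sum_congr rfl fun i _ => Finset.sum_congr rfl fun j _ => by ring
    rw [add_sq, h1]; ring
  have hintA : Integrable (fun ω => ∑ i, ∑ j, (a i * a j) * (y i ω * y j ω)) μ :=
    integrable_finset_sum _ fun i _ => integrable_finset_sum _ fun j _ => hmul i j
  have hintB : Integrable (fun ω => (2*b) * ∑ i, a i * y i ω + b^2) μ :=
    (((integrable_finset_sum _ fun i _ => (hint i).const_mul (a i)).const_mul _).add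
      (integrable_const _))
  calc ∫ ω, (∑ i, a i * y i ω + b)^2 ∂μ
      = ∫ ω, (∑ i, ∑ j, (a i * a j) * (y i ω * y j ω)
          + ((2*b) * ∑ i, a i * y i ω + b^2)) ∂μ := by
        exact integral_congr_ae (Filter.Eventually.of_forall fun ω => hpt ω)
    _ = (∑ i, ∑ j, (a i * a j) * ∫ ω, y i ω * y j ω ∂μ)
        + ((2*b) * ∑ i, a i * ∫ ω, y i ω ∂μ + b^2) := by
        rw [integral_add hintA hintB]
        congr 1
        · rw [integral_finset_sum _ fun i _ => integrable_finset_sum _ fun j _ => hmul i j]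
          refine Finset.sum_congr rfl fun i _ => ?_
          rw [integral_finset_sum _ fun j _ => hmul i j]
          exact Finset.sum_congr rfl fun j _ => integral_const_mul _ _
        · rw [integral_add ((integrable_finset_sum _ fun i _ => (hint i).const_mul (a i)).const_mul _) (integrable_const _),
            integral_const_mul, integral_finset_sum _ fun i _ => (hint i).const_mul (a i)]
          simp [integral_const_mul]
    _ = ∑ i, (a i)^2 * ∫ ω, (y i ω)^2 ∂μ + b^2 := by
        simp only [hmean, mul_zero, Finset.sum_const_zero, zero_add]
        congr 1
        refine Finset.sum_congr rfl fun i _ => ?_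
        rw [Finset.sum_eq_single i (fun j _ hj => by rw [hcross i j (Ne.symm hj), mul_zero])
          (fun h => absurd (Finset.mem_univ i) h)]
        simp [sq]

lemma trace_sum_smul_mul {p K : ℕ} (M : Fin K → Matrix (Fin p) (Fin p) ℝ)
    (x y : Fin K → ℝ) :
    ((∑ i, x i • M i) * (∑ j, y j • M j)).trace
      = ∑ i, ∑ j, x i * y j * (M i * M j).trace := by
  rw [Finset.sum_mul, Matrix.trace_sum]
  refine Finset.sum_congr rfl fun i _ => ?_
  rw [Finset.mul_sum, Matrix.trace_sum]
  refine Finset.sum_congr rfl fun j _ => ?_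
  rw [smul_mul_assoc, mul_smul_comm, Matrix.trace_smul, Matrix.trace_smul]
  simp [smul_eq_mul]; ring

lemma trace_sum_smul_mul_right {p K : ℕ} (M : Fin K → Matrix (Fin p) (Fin p) ℝ)
    (x : Fin K → ℝ) (Z : Matrix (Fin p) (Fin p) ℝ) :
    ((∑ i, x i • M i) * Z).trace = ∑ i, x i * (M i * Z).trace := by
  rw [Finset.sum_mul, Matrix.trace_sum]
  exact Finset.sum_congr rfl fun i _ => by rw [smul_mul_assoc, Matrix.trace_smul]; simp

lemma sum3_comm {α : Type*} [AddCommMonoid α] {m n k : ℕ}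
    (f : Fin m → Fin n → Fin k → α) :
    ∑ a, ∑ b, ∑ c, f a b c = ∑ c, ∑ a, ∑ b, f a b c := by
  calc ∑ a, ∑ b, ∑ c, f a b c
      = ∑ a, ∑ c, ∑ b, f a b c :=
        Finset.sum_congr rfl fun _ _ => Finset.sum_comm
    _ = ∑ c, ∑ a, ∑ b, f a b c := Finset.sum_comm

/-- Theorem 1 of the paper: the MSE of the linearly pooled
estimator is the quadratic `p (aᵀ(D+C)a − 2 cₖᵀa + c_{kk})`, and `D + C` is
symmetric positive definite. -/
theorem mse_of_linear_pooling
    {Ω : Type*} [MeasurableSpace Ω] (μ : Measure Ω) [IsProbabilityMeasure μ]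
    (p K : ℕ) (hp : 0 < p)
    (S : Fin K → Ω → Matrix (Fin p) (Fin p) ℝ)
    (hmeas : ∀ k, Measurable (S k))
    (hsymm : ∀ k ω, (S k ω)ᵀ = S k ω)
    (hL2 : ∀ k i j, MemLp (fun ω => S k ω i j) 2 μ)
    (hindep : iIndepFun S μ)
    (M : Fin K → Matrix (Fin p) (Fin p) ℝ)
    (hM : ∀ k, matExp μ (S k) = M k)
    (δ : Fin K → ℝ)
    (hδ : ∀ k, δ k = (p : ℝ)⁻¹ * ∫ ω, frobSq (S k ω - M k) ∂μ)
    (hδpos : ∀ k, 0 < δ k)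
    (C : Matrix (Fin K) (Fin K) ℝ)
    (hC : ∀ i j, C i j = (p : ℝ)⁻¹ * (M i * M j).trace)
    (D : Matrix (Fin K) (Fin K) ℝ) (hD : D = Matrix.diagonal δ) :
    (∀ (a : Fin K → ℝ) (k : Fin K),
        ∫ ω, frobSq (∑ i, a i • S i ω - M k) ∂μ
          = p * (a ⬝ᵥ ((D + C) *ᵥ a) - 2 * ((fun i => C i k) ⬝ᵥ a) + C k k))
      ∧ (D + C).IsSymm ∧ (D + C).PosDef := by
  have hpne : (p : ℝ) ≠ 0 := Nat.cast_ne_zero.mpr hp.ne'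
  -- symmetry of the means
  have hMs : ∀ i, (M i)ᵀ = M i := by
    intro i
    rw [← hM i]
    ext r c
    show (∫ ω, S i ω c r ∂μ) = ∫ ω, S i ω r c ∂μ
    refine integral_congr_ae (Filter.Eventually.of_forall fun ω => ?_)
    have := congrFun (congrFun (hsymm i ω) r) c
    simpa [Matrix.transpose_apply] using this
  -- centered variables
  set Y : Fin K → Ω → Matrix (Fin p) (Fin p) ℝ := fun i ω => S i ω - M i with hYdef
  have hYL2 : ∀ i r c, MemLp (fun ω => Y i ω r c) 2 μ := by
    intro i r c
    exact (hL2 i r c).sub (memLp_const (M i r c))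
  have hYint : ∀ i r c, Integrable (fun ω => Y i ω r c) μ :=
    fun i r c => (hYL2 i r c).integrable one_le_two
  have hSint : ∀ i r c, Integrable (fun ω => S i ω r c) μ :=
    fun i r c => (hL2 i r c).integrable one_le_two
  have hSmean : ∀ i r c, (∫ ω, S i ω r c ∂μ) = M i r c := by
    intro i r c; rw [← hM i]; rfl
  have hYmean : ∀ i r c, ∫ ω, Y i ω r c ∂μ = 0 := by
    intro i r c
    simp only [Y, Matrix.sub_apply]
    rw [integral_sub (hSint i r c) (integrable_const _), hSmean]
    simp
  have hYindep : ∀ i j, i ≠ j → ∀ r c,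
      IndepFun (fun ω => Y i ω r c) (fun ω => Y j ω r c) μ := by
    intro i j hij r c
    have hev : ∀ m : Fin K, Measurable (fun A : Matrix (Fin p) (Fin p) ℝ => A r c - M m r c) := by
      intro m
      have h1 : Measurable (fun f : Fin p → Fin p → ℝ => f r c) :=
        (measurable_pi_apply c).comp (measurable_pi_apply r)
      exact h1.sub measurable_const
    exact (hindep.indepFun hij).comp (hev i) (hev j)
  have hcross : ∀ i j, i ≠ j → ∀ r c, ∫ ω, Y i ω r c * Y j ω r c ∂μ = 0 := by
    intro i j hij r c
    have h := (hYindep i j hij r c).integral_fun_mul_eq_mul_integral (hYint i r c).aestronglyMeasurable (hYint j r c).aestronglyMeasurable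
    rw [hYmean, zero_mul] at h
    exact h
  -- integral of frobSq of centered variable
  have hfrobY : ∀ i, ∫ ω, frobSq (Y i ω) ∂μ = ∑ c, ∑ r, ∫ ω, (Y i ω r c)^2 ∂μ := by
    intro i
    rw [integral_congr_ae (Filter.Eventually.of_forall fun ω => frobSq_eq' (Y i ω))]
    rw [integral_finset_sum _ fun c _ =>
      integrable_finset_sum _ fun r _ => (hYL2 i r c).integrable_sq]
    exact Finset.sum_congr rfl fun c _ =>
      integral_finset_sum _ fun r _ => (hYL2 i r c).integrable_sq
  have hδ' : ∀ i, ∑ c, ∑ r, ∫ ω, (Y i ω r c)^2 ∂μ = p * δ i := by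
    intro i
    rw [← hfrobY, hδ i, ← mul_assoc, mul_inv_cancel₀ hpne, one_mul]
  refine ⟨?_, ?_, ?_⟩
  · -- main MSE identity
    intro a k
    set b : Fin p → Fin p → ℝ := fun r c => ∑ i, a i * M i r c - M k r c with hb
    have hentry : ∀ ω r c, (∑ i, a i • S i ω - M k) r c
        = ∑ i, a i * Y i ω r c + b r c := by
      intro ω r c
      simp only [Matrix.sub_apply, Matrix.sum_apply, Matrix.smul_apply, smul_eq_mul, Y, hb]
      have : ∑ i, a i * (S i ω r c - M i r c)
          = ∑ i, a i * S i ω r c - ∑ i, a i * M i r c := by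
        rw [← Finset.sum_sub_distrib]
        exact Finset.sum_congr rfl fun i _ => mul_sub _ _ _
      rw [this]; ring
    have hintsq : ∀ r c : Fin p,
        Integrable (fun ω => (∑ i, a i * Y i ω r c + b r c)^2) μ := by
      intro r c
      have hm : MemLp (fun ω => ∑ i, a i * Y i ω r c + b r c) 2 μ := by
        refine MemLp.add ?_ (memLp_const _)
        exact memLp_finset_sum _ fun i _ => (hYL2 i r c).const_mul (a i)
      exact hm.integrable_sq
    have hperrc : ∀ r c : Fin p,
        ∫ ω, (∑ i, a i * Y i ω r c + b r c)^2 ∂μ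
          = ∑ i, (a i)^2 * ∫ ω, (Y i ω r c)^2 ∂μ + (b r c)^2 := by
      intro r c
      exact integral_sq_sum_add_const μ (fun i ω => Y i ω r c)
        (fun i => hYL2 i r c) (fun i => hYmean i r c)
        (fun i j hij => hcross i j hij r c) a (b r c)
    -- trace algebra for the deterministic part
    set N : Matrix (Fin p) (Fin p) ℝ := ∑ i, a i • M i with hN
    have hNs : Nᵀ = N := by
      rw [hN, Matrix.transpose_sum]
      exact Finset.sum_congr rfl fun i _ => by rw [Matrix.transpose_smul, hMs]
    have hBN : ∀ r c, b r c = (N - M k) r c := by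
      intro r c
      simp [hb, hN, Matrix.sub_apply, Matrix.sum_apply, Matrix.smul_apply, smul_eq_mul]
    have htrB : ∑ c, ∑ r, (b r c)^2
        = (∑ i, ∑ j, a i * a j * (M i * M j).trace)
          - 2 * ∑ i, a i * (M i * M k).trace + (M k * M k).trace := by
      have h0 : ∑ c, ∑ r, (b r c)^2 = frobSq (N - M k) := by
        rw [frobSq_eq']
        exact Finset.sum_congr rfl fun c _ => Finset.sum_congr rfl fun r _ => by
          rw [hBN]
      rw [h0, frobSq, Matrix.transpose_sub, hNs, hMs, sub_mul, mul_sub, mul_sub,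
        Matrix.trace_sub, Matrix.trace_sub, Matrix.trace_sub]
      rw [show (N * N).trace = ∑ i, ∑ j, a i * a j * (M i * M j).trace from
          trace_sum_smul_mul M a a,
        show (N * M k).trace = ∑ i, a i * (M i * M k).trace from
          trace_sum_smul_mul_right M a (M k),
        Matrix.trace_mul_comm (M k) N,
        show (N * M k).trace = ∑ i, a i * (M i * M k).trace from
          trace_sum_smul_mul_right M a (M k)]
      ring
    -- RHS expansion
    have e1 : a ⬝ᵥ (D *ᵥ a) = ∑ i, (a i)^2 * δ i := by
      rw [hD]
      simp only [dotProduct, Matrix.mulVec_diagonal]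
      exact Finset.sum_congr rfl fun i _ => by ring
    have e2 : a ⬝ᵥ (C *ᵥ a) = (p : ℝ)⁻¹ * ∑ i, ∑ j, a i * a j * (M i * M j).trace := by
      simp only [dotProduct, Matrix.mulVec, hC]
      rw [Finset.mul_sum]
      refine Finset.sum_congr rfl fun i _ => ?_
      rw [Finset.mul_sum, Finset.mul_sum]
      exact Finset.sum_congr rfl fun j _ => by ring
    have e3 : (fun i => C i k) ⬝ᵥ a = (p : ℝ)⁻¹ * ∑ i, a i * (M i * M k).trace := by
      simp only [dotProduct, hC]
      rw [Finset.mul_sum]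
      exact Finset.sum_congr rfl fun i _ => by ring
    calc ∫ ω, frobSq (∑ i, a i • S i ω - M k) ∂μ
        = ∫ ω, ∑ c, ∑ r, (∑ i, a i * Y i ω r c + b r c)^2 ∂μ := by
          refine integral_congr_ae (Filter.Eventually.of_forall fun ω => ?_)
          show frobSq (∑ i, a i • S i ω - M k) = ∑ c, ∑ r, (∑ i, a i * Y i ω r c + b r c)^2
          rw [frobSq_eq']
          exact Finset.sum_congr rfl fun c _ => Finset.sum_congr rfl fun r _ => by
            rw [hentry]
      _ = ∑ c, ∑ r, ∫ ω, (∑ i, a i * Y i ω r c + b r c)^2 ∂μ := by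
          rw [integral_finset_sum _ fun c _ =>
            integrable_finset_sum _ fun r _ => hintsq r c]
          exact Finset.sum_congr rfl fun c _ =>
            integral_finset_sum _ fun r _ => hintsq r c
      _ = ∑ c, ∑ r, (∑ i, (a i)^2 * ∫ ω, (Y i ω r c)^2 ∂μ + (b r c)^2) := by
          exact Finset.sum_congr rfl fun c _ => Finset.sum_congr rfl fun r _ => hperrc r c
      _ = ∑ i, (a i)^2 * (p * δ i) + ∑ c, ∑ r, (b r c)^2 := by
          rw [Finset.sum_congr rfl fun c (_ : c ∈ Finset.univ) => Finset.sum_add_distrib,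
            Finset.sum_add_distrib]
          congr 1
          rw [sum3_comm (fun c r i => (a i)^2 * ∫ ω, (Y i ω r c)^2 ∂μ)]
          refine Finset.sum_congr rfl fun i _ => ?_
          simp only [← Finset.mul_sum]
          rw [hδ' i]
      _ = p * (a ⬝ᵥ ((D + C) *ᵥ a) - 2 * ((fun i => C i k) ⬝ᵥ a) + C k k) := by
          rw [Matrix.add_mulVec, dotProduct_add, e1, e2, e3, hC k k, htrB]
          rw [show (∑ i, (a i)^2 * ((p:ℝ) * δ i)) = (p:ℝ) * ∑ i, (a i)^2 * δ i from by
            rw [Finset.mul_sum]; exact Finset.sum_congr rfl fun i _ => by ring]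
          set Q := ∑ i, (a i)^2 * δ i
          set T := ∑ i, ∑ j, a i * a j * (M i * M j).trace
          set U := ∑ i, a i * (M i * M k).trace
          field_simp
          ring
  · -- symmetry
    rw [Matrix.IsSymm]
    ext i j
    rw [Matrix.transpose_apply, Matrix.add_apply, Matrix.add_apply, hD]
    rw [hC i j, hC j i, Matrix.trace_mul_comm]
    congr 1
    simp only [Matrix.diagonal_apply, eq_comm]
    split_ifs with h
    · rw [h]
    · rfl
  · -- positive definiteness
    rw [Matrix.posDef_iff_dotProduct_mulVec]
    constructor
    · rw [Matrix.IsHermitian]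
      ext i j
      rw [Matrix.conjTranspose_apply, Matrix.add_apply, Matrix.add_apply, hD]
      rw [hC i j, hC j i, Matrix.trace_mul_comm]
      simp only [Matrix.diagonal_apply, eq_comm, Matrix.add_apply, star_trivial,
        RCLike.star_def, map_add]
      congr 1
      split_ifs with h
      · rw [h]
      · rfl
    · intro x hx
      have hq : star x ⬝ᵥ ((D + C) *ᵥ x)
          = ∑ i, (x i)^2 * δ i
            + (p : ℝ)⁻¹ * ∑ i, ∑ j, x i * x j * (M i * M j).trace := by
        rw [Matrix.add_mulVec, dotProduct_add]
        congr 1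
        · rw [hD]
          simp only [dotProduct, Matrix.mulVec_diagonal, Pi.star_apply,
            star_trivial]
          exact Finset.sum_congr rfl fun i _ => by ring
        · simp only [dotProduct, Matrix.mulVec, hC, Pi.star_apply, star_trivial]
          rw [Finset.mul_sum]
          refine Finset.sum_congr rfl fun i _ => ?_
          rw [Finset.mul_sum, Finset.mul_sum]
          exact Finset.sum_congr rfl fun j _ => by ring
      rw [hq]
      have hT : 0 ≤ ∑ i, ∑ j, x i * x j * (M i * M j).trace := by
        have hNs' : (∑ i, x i • M i)ᵀ = ∑ i, x i • M i := by
          rw [Matrix.transpose_sum]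
          exact Finset.sum_congr rfl fun i _ => by rw [Matrix.transpose_smul, hMs]
        have hfr : frobSq (∑ i, x i • M i) = ∑ i, ∑ j, x i * x j * (M i * M j).trace := by
          rw [frobSq, hNs', trace_sum_smul_mul]
        rw [← hfr, frobSq_eq']
        exact Finset.sum_nonneg fun c _ => Finset.sum_nonneg fun r _ => sq_nonneg _
      have hD0 : 0 < ∑ i, (x i)^2 * δ i := by
        obtain ⟨i0, hi0⟩ := Function.ne_iff.mp hx
        refine Finset.sum_pos' (fun i _ => mul_nonneg (sq_nonneg _) (hδpos i).le) ?_
        have hi0' : x i0 ≠ 0 := hi0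
        exact ⟨i0, Finset.mem_univ _,
          mul_pos (lt_of_le_of_ne (sq_nonneg _) (Ne.symm (pow_ne_zero 2 hi0'))) (hδpos i0)⟩
      have : 0 ≤ (p : ℝ)⁻¹ * ∑ i, ∑ j, x i * x j * (M i * M j).trace :=
        mul_nonneg (by positivity) hT
      linarith
end
end

section
/- Let $S_1,\ldots,S_K$ be mutually independent random symmetric $p\times p$ matrices with finite second moments and common mean $E[S_k]=M\neq 0$ for all $k$, and $\delta_k=p^{-1}E[\|S_k-M\|_F^2]>0$. Let $c=\operatorname{tr}(M^2)/p$, $D=\operatorname{diag}(\delta_1,\ldots,\delta_K)$, and $\mu = c/(1+c\,\mathbf{1}^\top D^{-1}\mathbf{1})$. Then the unconstrained minimizer $a_k^\star=(D+C)^{-1}c_k$ of the mean squared error satisfies $A^\star=(a_1^\star\cdots a_K^\star)=\mu\,D^{-1}\mathbf{1}\mathbf{1}^\top$; i.e., all columns coincide and their entries equal $a_{jk}^\star = \mu/\delta_j = \mathrm{NMSE}(S_j)^{-1}/(1+\sum_{i=1}^K\mathrm{NMSE}(S_i)^{-1})$, where $\mathrm{NMSE}(S_j)=E[\|S_j-M\|_F^2]/\|M\|_F^2$.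 -/
open MeasureTheory Matrix ProbabilityTheory Filter Asymptotics

noncomputable section

/-- equal-covariance case. When `E[S_k] = M` for all `k`, the
unconstrained minimizer `a⋆ₖ = (D+C)⁻¹cₖ` satisfies `A⋆ = μ D⁻¹𝟏𝟏ᵀ`, i.e. all
columns coincide with entries `a⋆_{jk} = μ/δⱼ = NMSE(Sⱼ)⁻¹/(1+∑ᵢNMSE(Sᵢ)⁻¹)`. -/
theorem equal_covariance_optimal_coefficients
    {Ω : Type*} [MeasurableSpace Ω] (μ : Measure Ω) [IsProbabilityMeasure μ]
    (p K : ℕ) (hp : 0 < p) (hK : 0 < K)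
    (S : Fin K → Ω → Matrix (Fin p) (Fin p) ℝ)
    (hmeas : ∀ k, Measurable (S k))
    (hsymm : ∀ k ω, (S k ω)ᵀ = S k ω)
    (hL2 : ∀ k i j, MemLp (fun ω => S k ω i j) 2 μ)
    (hindep : iIndepFun S μ)
    (M : Matrix (Fin p) (Fin p) ℝ) (hMsymm : Mᵀ = M) (hM0 : M ≠ 0)
    (hM : ∀ k, matExp μ (S k) = M)
    (δ : Fin K → ℝ)
    (hδ : ∀ k, δ k = (p : ℝ)⁻¹ * ∫ ω, frobSq (S k ω - M) ∂μ)
    (hδpos : ∀ k, 0 < δ k)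
    (c : ℝ) (hc : c = (M * M).trace / p)
    (C : Matrix (Fin K) (Fin K) ℝ)
    (hC : ∀ i j, C i j = (p : ℝ)⁻¹ * (M * M).trace)
    (D : Matrix (Fin K) (Fin K) ℝ) (hD : D = Matrix.diagonal δ)
    (mu : ℝ) (hmu : mu = c / (1 + c * ∑ i, (δ i)⁻¹))
    (nmse : Fin K → ℝ)
    (hnmse : ∀ j, nmse j = (∫ ω, frobSq (S j ω - M) ∂μ) / frobSq M)
    (astar : Fin K → Fin K → ℝ)
    (hastar : ∀ k, astar k = (D + C)⁻¹ *ᵥ (fun i => C i k)) :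
    ∀ (k j : Fin K),
      astar k j = mu / δ j
        ∧ astar k j = (nmse j)⁻¹ / (1 + ∑ i, (nmse i)⁻¹) := by
  have hpR : (0:ℝ) < p := by exact_mod_cast hp
  -- trace of M*M is positive
  have htr : (M * M).trace = ∑ i, ∑ j, (M i j)^2 := by
    simp only [Matrix.trace, Matrix.diag, Matrix.mul_apply, sq]
    refine Finset.sum_congr rfl fun i _ => Finset.sum_congr rfl fun j _ => ?_
    have : M j i = M i j := by
      conv_lhs => rw [← hMsymm, Matrix.transpose_apply]
    rw [this]
  have htrpos : 0 < (M * M).trace := by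
    rw [htr]
    have hne : ∃ i j, M i j ≠ 0 := by
      by_contra h
      push_neg at h
      exact hM0 (Matrix.ext fun i j => h i j)
    obtain ⟨i0, j0, hij⟩ := hne
    have h1 : 0 < ∑ j, (M i0 j)^2 :=
      Finset.sum_pos' (fun j _ => sq_nonneg _) ⟨j0, Finset.mem_univ _, by positivity⟩
    refine Finset.sum_pos' (fun i _ => Finset.sum_nonneg fun j _ => sq_nonneg _)
      ⟨i0, Finset.mem_univ _, h1⟩
  have hcpos : 0 < c := by rw [hc]; positivity
  have hCentry : ∀ i j, C i j = c := by
    intro i j; rw [hC i j, hc]; field_simp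
  set s : ℝ := ∑ i, (δ i)⁻¹ with hs
  have hsnn : 0 ≤ s := Finset.sum_nonneg fun i _ => inv_nonneg.mpr (hδpos i).le
  have hden : 0 < 1 + c * s := by have := mul_nonneg hcpos.le hsnn; linarith
  have hmupos : 0 < mu := by rw [hmu]; exact div_pos hcpos hden
  -- positive definiteness of D + C
  have hDpd : D.PosDef := by
    rw [hD]; exact Matrix.posDef_diagonal_iff.mpr hδpos
  have hCpsd : C.PosSemidef := by
    rw [Matrix.posSemidef_iff_dotProduct_mulVec]
    constructor
    · ext i j
      simp [Matrix.conjTranspose_apply, hCentry i j, hCentry j i]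
    · intro x
      have : star x ⬝ᵥ C *ᵥ x = c * (∑ i, x i)^2 := by
        simp only [dotProduct, Matrix.mulVec, dotProduct, hCentry,
          Pi.star_apply, star_trivial]
        rw [sq, Finset.sum_mul, Finset.mul_sum]
        refine Finset.sum_congr rfl fun i _ => ?_
        rw [Finset.mul_sum, Finset.mul_sum, Finset.mul_sum]
        refine Finset.sum_congr rfl fun j _ => by ring
      rw [this]
      positivity
  have hpd : (D + C).PosDef := hDpd.add_posSemidef hCpsd
  have hdet : IsUnit (D + C).det := (Matrix.isUnit_iff_isUnit_det _).mp hpd.isUnit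
  -- the candidate solution
  set x : Fin K → ℝ := fun j => mu / δ j with hx
  have hsolve : (D + C) *ᵥ x = fun _ => c := by
    funext i
    have : ((D + C) *ᵥ x) i = δ i * x i + c * ∑ j, x j := by
      simp only [Matrix.mulVec, dotProduct, Matrix.add_apply, hD,
        Matrix.diagonal_apply, hCentry, add_mul, Finset.sum_add_distrib, Finset.mul_sum]
      congr 1
      · rw [Finset.sum_eq_single i]
        · simp
        · intro b _ hb; simp [Ne.symm hb]
        · intro h; exact absurd (Finset.mem_univ i) h
    rw [this]
    have h1 : δ i * x i = mu := by
      show δ i * (mu / δ i) = mu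
      rw [mul_comm, div_mul_cancel₀ _ (hδpos i).ne']
    have h2 : ∑ j, x j = mu * s := by
      rw [hs, Finset.mul_sum]
      exact Finset.sum_congr rfl fun j _ => by rw [hx]; field_simp
    rw [h1, h2]
    have : mu * (1 + c * s) = c := by
      rw [hmu]; field_simp
    linarith [this]
  have hcol : ∀ k : Fin K, (fun i => C i k) = fun _ : Fin K => c := by
    intro k; funext i; exact hCentry i k
  have hastar' : ∀ k, astar k = x := by
    intro k
    rw [hastar k, hcol k, ← hsolve, Matrix.mulVec_mulVec, Matrix.nonsing_inv_mul _ hdet,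
      Matrix.one_mulVec]
  -- nmse facts
  have hfrobM : frobSq M = (M * M).trace := by rw [frobSq, hMsymm]
  have hnmse' : ∀ j, nmse j = δ j / c := by
    intro j
    have hint : ∫ ω, frobSq (S j ω - M) ∂μ = p * δ j := by
      rw [hδ j]; field_simp
    rw [hnmse j, hint, hfrobM, hc]
    field_simp
  intro k j
  have h1 : astar k j = mu / δ j := by rw [hastar' k]
  refine ⟨h1, ?_⟩
  rw [h1]
  have hsum : ∑ i, (nmse i)⁻¹ = c * s := by
    rw [hs, Finset.mul_sum]
    refine Finset.sum_congr rfl fun i _ => ?_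
    rw [hnmse' i]
    field_simp
  rw [hsum, hnmse' j, hmu]
  have hδj := hδpos j
  rw [div_div, inv_div, div_div]
  ring_nf
end
end

section
/- Under the equal-covariance setting ($E[S_k]=M\neq 0$ for all $k$), if additionally all scaled mean squared errors are equal, $\delta_1=\cdots=\delta_K\equiv\delta>0$, then every entry of the unconstrained optimal coefficient matrix equals $a^\star = 1/(\mathrm{NMSE}+K)$, where $\mathrm{NMSE}=E[\|S_j-M\|_F^2]/\|M\|_F^2$ (the same for all $j$), and consequently $a^\star < 1/K$. -/
open MeasureTheory Matrix ProbabilityTheory Filter Asymptotics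

noncomputable section

/-- equal-covariance, equal-MSE case. If `E[S_k] = M ≠ 0` for
all `k` and the scaled MSEs are all equal to `δ > 0`, then every entry of the
unconstrained optimal coefficient matrix equals `a⋆ = 1/(NMSE + K) < 1/K`. -/
theorem equal_covariance_equal_delta_coefficients
    {Ω : Type*} [MeasurableSpace Ω] (μ : Measure Ω) [IsProbabilityMeasure μ]
    (p K : ℕ) (hp : 0 < p) (hK : 0 < K)
    (S : Fin K → Ω → Matrix (Fin p) (Fin p) ℝ)
    (hmeas : ∀ k, Measurable (S k))
    (hsymm : ∀ k ω, (S k ω)ᵀ = S k ω)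
    (hL2 : ∀ k i j, MemLp (fun ω => S k ω i j) 2 μ)
    (hindep : iIndepFun S μ)
    (M : Matrix (Fin p) (Fin p) ℝ) (hMsymm : Mᵀ = M) (hM0 : M ≠ 0)
    (hM : ∀ k, matExp μ (S k) = M)
    (δ : ℝ) (hδ : ∀ k : Fin K, (p : ℝ)⁻¹ * ∫ ω, frobSq (S k ω - M) ∂μ = δ)
    (hδpos : 0 < δ)
    (C : Matrix (Fin K) (Fin K) ℝ)
    (hC : ∀ i j, C i j = (p : ℝ)⁻¹ * (M * M).trace)
    (D : Matrix (Fin K) (Fin K) ℝ) (hD : D = Matrix.diagonal (fun _ : Fin K => δ))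
    (nmse : ℝ)
    (hnmse : ∀ j : Fin K, nmse = (∫ ω, frobSq (S j ω - M) ∂μ) / frobSq M)
    (astar : Fin K → Fin K → ℝ)
    (hastar : ∀ k, astar k = (D + C)⁻¹ *ᵥ (fun i => C i k)) :
    ∀ (k j : Fin K),
      astar k j = 1 / (nmse + K) ∧ astar k j < 1 / K := by
  intro k j
  have hpR : (0:ℝ) < p := Nat.cast_pos.mpr hp
  have hKR : (0:ℝ) < K := Nat.cast_pos.mpr hK
  obtain ⟨c, hc⟩ : ∃ c : ℝ, c = (p : ℝ)⁻¹ * (M * M).trace := ⟨_, rfl⟩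
  have hC' : ∀ i j : Fin K, C i j = c := by intro i j; rw [hC, hc]
  have hfrobM : frobSq M = (M * M).trace := by rw [frobSq, hMsymm]
  have hfrob_eq : frobSq M = ∑ i : Fin p, ∑ l : Fin p, (M l i)^2 := by
    simp [frobSq, Matrix.trace, Matrix.mul_apply, Matrix.transpose_apply, sq,
      Matrix.diag]
  have hfrob_pos : 0 < frobSq M := by
    rcases lt_or_eq_of_le (show (0:ℝ) ≤ frobSq M by rw [hfrob_eq]; positivity) with h | h
    · exact h
    · exfalso
      apply hM0
      ext l i
      have h0 : ∑ i : Fin p, ∑ l : Fin p, (M l i)^2 = 0 := by rw [← hfrob_eq, ← h]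
      have h1 := (Finset.sum_eq_zero_iff_of_nonneg (fun i _ => by positivity)).mp h0 i
        (Finset.mem_univ i)
      have h2 := (Finset.sum_eq_zero_iff_of_nonneg (fun l _ => by positivity)).mp h1 l
        (Finset.mem_univ l)
      simpa [pow_eq_zero_iff] using h2
  have hcpos : 0 < c := by
    rw [hc, ← hfrobM]; positivity
  have hden : 0 < δ + c * K := by positivity
  have hδne : δ ≠ 0 := hδpos.ne'
  obtain ⟨β, hβ⟩ : ∃ β : ℝ, β = c / (δ + c * K) := ⟨_, rfl⟩
  have hβid : β * (δ + c * K) = c := by rw [hβ]; exact div_mul_cancel₀ c hden.ne'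
  have hinv : (D + C)⁻¹ =
      Matrix.of (fun i l : Fin K => δ⁻¹ * ((if i = l then (1:ℝ) else 0) - β)) := by
    apply Matrix.inv_eq_right_inv
    ext i m
    simp only [Matrix.mul_apply, Matrix.add_apply, hD, Matrix.diagonal_apply, hC',
      Matrix.of_apply, Matrix.one_apply]
    have hsplit : ∀ l : Fin K,
        ((if i = l then δ else 0) + c) * (δ⁻¹ * ((if l = m then (1:ℝ) else 0) - β))
        = (if i = l then δ * (δ⁻¹ * ((if l = m then (1:ℝ) else 0) - β)) else 0)
          + ((if l = m then c * δ⁻¹ else 0) - c * δ⁻¹ * β) := by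
      intro l
      split_ifs <;> ring
    rw [Finset.sum_congr rfl (fun l _ => hsplit l), Finset.sum_add_distrib,
      Finset.sum_ite_eq, Finset.sum_sub_distrib, Finset.sum_ite_eq']
    simp only [Finset.mem_univ, if_true, Finset.sum_const, Finset.card_univ,
      Fintype.card_fin, nsmul_eq_mul]
    rw [hβ]
    by_cases h : i = m <;> simp only [h, if_true, if_false] <;> field_simp <;> ring
  have hval : astar k j = c / (δ + c * K) := by
    rw [hastar k, hinv]
    simp only [Matrix.mulVec, dotProduct, Matrix.of_apply, hC']
    have hsplit : ∀ l : Fin K, δ⁻¹ * ((if j = l then (1:ℝ) else 0) - β) * c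
        = (if j = l then δ⁻¹ * c else 0) - δ⁻¹ * β * c := by
      intro l
      split_ifs <;> ring
    rw [Finset.sum_congr rfl (fun l _ => hsplit l), Finset.sum_sub_distrib,
      Finset.sum_ite_eq]
    simp only [Finset.mem_univ, if_true, Finset.sum_const, Finset.card_univ,
      Fintype.card_fin, nsmul_eq_mul]
    rw [hβ]
    field_simp
    ring
  have hint : (∫ ω, frobSq (S j ω - M) ∂μ) = (p : ℝ) * δ := by
    have h := hδ j
    field_simp at h
    linarith
  have hnm : nmse = δ / c := by
    rw [hnmse j, hint, hc, ← hfrobM] at *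
    rw [div_eq_div_iff hfrob_pos.ne' (by positivity : ((p:ℝ)⁻¹ * frobSq M) ≠ 0)] at *
    · field_simp
  have hnmpos : 0 < nmse := by rw [hnm]; positivity
  constructor
  · rw [hval, hnm]
    rw [div_eq_div_iff hden.ne' (by positivity : (δ / c + (K:ℝ)) ≠ 0)]
    field_simp
  · rw [hval]
    rw [div_lt_div_iff₀ hden hKR]
    nlinarith [mul_pos hcpos hKR]
end
end
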